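/- Let G be a group acting by homeomorphisms on a compact Hausdorff space Z, let H ≤ G be a subgroup of finite index, and let z ∈ Z be a point with dense G-orbit. If z is recurrent for the G-action, then z is recurrent for the restricted H-action, i.e., for every open U containing z, the set {h ∈ H : h·z ∈ U} is infinite. -/

import Mathlib

open Pointwise


/-- A transitive point which is recurrent for a `G`-action is recurrent for the restriction
of the action to a finite index subgroup `H ≤ G`. -/
theorem recurrent_finite_index {G Z : Type*} [Group G] [TopologicalSpace Z]
    [CompactSpace Z] [T2Space Z] [MulAction G Z] [ContinuousConstSMul G Z]
    (H : Subgroup G) [H.FiniteIndex]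
    (z : Z) (hz : closure (MulAction.orbit G z) = Set.univ)
    (hrec : ∀ U : Set Z, IsOpen U → z ∈ U → {g : G | g • z ∈ U}.Infinite) :
    ∀ U : Set Z, IsOpen U → z ∈ U → {h : H | (h : G) • z ∈ U}.Infinite := by
  classical
  set N : Subgroup G := H.normalCore with hNdef
  have hNle : N ≤ H := H.normalCore_le
  have hNnormal : N.Normal := H.normalCore_normal
  haveI : N.FiniteIndex := H.finiteIndex_normalCore
  haveI : Finite (G ⧸ N) := N.finite_quotient_of_finiteIndex
  intro U hUopen hzU
  by_cases hStab : ({g : G | g • z = z}).Infinite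
  · -- Case A : infinite stabilizer
    haveI := hStab.to_subtype
    obtain ⟨q, hq⟩ := Finite.exists_infinite_fiber
      (fun s : {g : G | g • z = z} => (QuotientGroup.mk (s : G) : G ⧸ N))
    haveI := hq
    obtain ⟨a⟩ : Nonempty ((fun s : {g : G | g • z = z} =>
        (QuotientGroup.mk (s : G) : G ⧸ N)) ⁻¹' {q}) := inferInstance
    rw [← Set.infinite_coe_iff]
    have hamk : (QuotientGroup.mk ((a : {g : G | g • z = z}) : G) : G ⧸ N) = q := a.2
    refine Infinite.of_injective
      (β := ((fun s : {g : G | g • z = z} =>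
        (QuotientGroup.mk (s : G) : G ⧸ N)) ⁻¹' {q})) (fun s => ?_) ?_
    · refine ⟨⟨((a : {g : G | g • z = z}) : G)⁻¹ * ((s : {g : G | g • z = z}) : G), hNle ?_⟩, ?_⟩
      · exact QuotientGroup.eq.mp (hamk.trans s.2.symm)
      · have ha : ((a : {g : G | g • z = z}) : G) • z = z := (a : {g : G | g • z = z}).2
        have hs : ((s : {g : G | g • z = z}) : G) • z = z := (s : {g : G | g • z = z}).2
        show (((a : {g : G | g • z = z}) : G)⁻¹ * _) • z ∈ U
        have hainv : ((a : {g : G | g • z = z}) : G)⁻¹ • z = z := by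
          rw [inv_smul_eq_iff, ha]
        rw [mul_smul, hs, hainv]
        exact hzU
    · intro s₁ s₂ hs
      have : ((a : {g : G | g • z = z}) : G)⁻¹ * ((s₁ : {g : G | g • z = z}) : G)
          = ((a : {g : G | g • z = z}) : G)⁻¹ * ((s₂ : {g : G | g • z = z}) : G) := by
        exact congrArg (fun t => ((t : H) : G)) (congrArg Subtype.val hs)
      have := mul_left_cancel this
      exact Subtype.ext (Subtype.ext this)
  · -- Case B : finite stabilizer
    have hStabFin : ({g : G | g • z = z}).Finite := Set.not_infinite.mp hStab
    -- B1 : every neighborhood of z contains a point of the G-orbit distinct from z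
    have B1 : ∀ V : Set Z, IsOpen V → z ∈ V → ∃ g : G, g • z ∈ V ∧ g • z ≠ z := by
      intro V hV hzV
      by_contra hcon
      push_neg at hcon
      exact hrec V hV hzV (hStabFin.subset fun g hg => hcon g hg)
    -- the N-orbit of z as a set
    set B : Set Z := (fun g : G => g • z) '' (N : Set G) with hBdef
    have hBeq : ∀ h ∈ N, h • B = B := by
      intro h hh
      apply Set.eq_of_subset_of_subset
      · rintro x ⟨y, ⟨g, hg, rfl⟩, rfl⟩
        exact ⟨h * g, mul_mem hh hg, by simp [mul_smul]⟩
      · rintro x ⟨g, hg, rfl⟩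
        exact ⟨h⁻¹ • g • z, ⟨h⁻¹ * g, mul_mem (inv_mem hh) hg, by simp [mul_smul]⟩,
          smul_inv_smul h _⟩
    set Y : Set Z := closure B with hYdef
    have hYinv : ∀ h ∈ N, h • Y = Y := by
      intro h hh
      rw [hYdef, ← closure_smul, hBeq h hh]
    -- B2 : pigeonhole over cosets
    have B2 : ∃ q : G ⧸ N, ∀ V : Set Z, IsOpen V → z ∈ V →
        ∃ h ∈ N, (q.out * h) • z ∈ V ∧ (q.out * h) • z ≠ z := by
      by_contra hcon
      push_neg at hcon
      choose V hVopen hzV hVfail using hcon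
      have hWopen : IsOpen (⋂ q, V q) := isOpen_iInter_of_finite hVopen
      have hzW : z ∈ ⋂ q, V q := Set.mem_iInter.mpr hzV
      obtain ⟨g, hgW, hgne⟩ := B1 _ hWopen hzW
      set q : G ⧸ N := QuotientGroup.mk g with hqdef
      have hmem : q.out⁻¹ * g ∈ N := QuotientGroup.eq.mp (QuotientGroup.out_eq' q)
      have heq : q.out * (q.out⁻¹ * g) = g := by group
      have := hVfail q (q.out⁻¹ * g) hmem
        (by rw [heq]; exact Set.mem_iInter.mp hgW q)
      rw [heq] at this
      exact hgne this
    obtain ⟨q₀, hq₀⟩ := B2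
    set g₀ : G := q₀.out with hg₀def
    have hg₀mk : (QuotientGroup.mk g₀ : G ⧸ N) = q₀ := QuotientGroup.out_eq' q₀
    -- z is in the closure of g₀ • B
    have hzA : z ∈ closure (g₀ • B) := by
      rw [mem_closure_iff]
      intro o ho hzo
      obtain ⟨h, hhN, hin, -⟩ := hq₀ o ho hzo
      exact ⟨(g₀ * h) • z, hin, ⟨h • z, ⟨h, hhN, rfl⟩, (mul_smul g₀ h z).symm⟩⟩
    have hzg₀Y : z ∈ g₀ • Y := by
      rwa [closure_smul] at hzA
    have hg₀Yclosed : IsClosed (g₀ • Y) := isClosed_closure.smul g₀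
    -- Y ⊆ g₀ • Y
    have hYsub : Y ⊆ g₀ • Y := by
      apply closure_minimal _ hg₀Yclosed
      rintro x ⟨h, hh, rfl⟩
      have hconj : g₀⁻¹ * h * g₀ ∈ N := by
        have := hNnormal.conj_mem h hh g₀⁻¹
        simpa using this
      have : h • z ∈ h • (g₀ • Y) := Set.smul_mem_smul_set hzg₀Y
      rwa [smul_smul, show h * g₀ = g₀ * (g₀⁻¹ * h * g₀) by group, ← smul_smul,
        hYinv _ hconj] at this
    -- chain argument : g₀ • Y ⊆ Y
    have hchain : ∀ j : ℕ, Y ⊆ g₀ ^ j • Y := by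
      intro j
      induction j with
      | zero => simp
      | succ j ih =>
        calc Y ⊆ g₀ • Y := hYsub
          _ ⊆ g₀ • (g₀ ^ j • Y) := Set.smul_set_mono ih
          _ = g₀ ^ (j + 1) • Y := by rw [smul_smul, ← pow_succ']
    have hk : g₀ ^ orderOf q₀ ∈ N := by
      rw [← QuotientGroup.eq_one_iff, QuotientGroup.mk_pow, hg₀mk]
      exact pow_orderOf_eq_one q₀
    obtain ⟨m, hm⟩ : ∃ m, orderOf q₀ = m + 1 :=
      ⟨orderOf q₀ - 1, (Nat.succ_pred_eq_of_pos (orderOf_pos q₀)).symm⟩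
    have hg₀Y : g₀ • Y ⊆ Y := by
      calc g₀ • Y ⊆ g₀ • (g₀ ^ m • Y) := Set.smul_set_mono (hchain m)
        _ = g₀ ^ orderOf q₀ • Y := by rw [smul_smul, ← pow_succ', ← hm]
        _ = Y := hYinv _ hk
    -- B4 : every neighborhood of z contains a point of the N-orbit distinct from z
    have B4 : ∀ V : Set Z, IsOpen V → z ∈ V → ∃ h ∈ N, h • z ∈ V ∧ h • z ≠ z := by
      intro V hV hzV
      obtain ⟨h, hhN, hin, hne⟩ := hq₀ V hV hzV
      have haY : (g₀ * h) • z ∈ Y :=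
        hg₀Y ((Set.smul_set_mono subset_closure)
          ⟨h • z, ⟨h, hhN, rfl⟩, (mul_smul g₀ h z).symm⟩)
      have hopen : IsOpen (V ∩ {z}ᶜ) := hV.inter isClosed_singleton.isOpen_compl
      have hmem : (g₀ * h) • z ∈ V ∩ {z}ᶜ := ⟨hin, hne⟩
      obtain ⟨b, ⟨hbV, hbz⟩, g, hgN, rfl⟩ :=
        mem_closure_iff.mp haY _ hopen hmem
      exact ⟨g, hgN, hbV, hbz⟩
    -- B5 : conclusion
    by_contra hfin
    rw [Set.not_infinite] at hfin
    set F : Set Z := ((fun h : H => (h : G) • z) '' {h : H | (h : G) • z ∈ U}) \ {z}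
      with hFdef
    have hFfin : F.Finite := (hfin.image _).diff
    have hU' : IsOpen (U ∩ Fᶜ) := hUopen.inter hFfin.isClosed.isOpen_compl
    have hzU' : z ∈ U ∩ Fᶜ := ⟨hzU, fun hc => hc.2 rfl⟩
    obtain ⟨h, hhN, ⟨hhU, hhF⟩, hhne⟩ := B4 _ hU' hzU'
    exact hhF ⟨⟨(⟨h, hNle hhN⟩ : H), hhU, rfl⟩, hhne⟩
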